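/- Let H be the self-adjoint finite-range operator on ℓ²(ℤ) given by (Hu)_n = Σ_{|k|≤K} w_k u_{n+k} + v_n u_n with conj(w_{-k}) = w_k and v real bounded. For sequences f, g define W_{[-r,r]}(f,g) = Σ_{n=-r}^{r} [(Hf)_n · conj(g_n) - f_n · conj((Hg)_n)]. Then |Σ_{r=1}^{R} W_{[-r,r]}(f,g)| ≤ (Σ_{j=1}^{K} 4j|w_j|) · ‖f‖_{ℓ²(R+K)} · ‖g‖_{ℓ²(R+K)}, where ‖f‖_{ℓ²(N)}² = Σ_{|n|≤N} |f_n|². -/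

import Mathlib

open Finset


private lemma shiftSum (a b k : ℤ) (φ : ℤ → ℂ) :
    ∑ n ∈ Icc a b, φ n = ∑ m ∈ Icc (a - k) (b - k), φ (m + k) := by
  have h := map_add_right_Icc (a-k) (b-k) k
  rw [sub_add_cancel, sub_add_cancel] at h
  rw [← h, Finset.sum_map]
  simp [addRightEmbedding]

private lemma negSum (K : ℕ) (h : ℤ → ℂ) :
    ∑ k ∈ Icc (-(K:ℤ)) K, h (-k) = ∑ k ∈ Icc (-(K:ℤ)) K, h k := by
  apply Finset.sum_nbij' (fun k => -k) (fun k => -k) <;> intros <;>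
    simp_all [Finset.mem_Icc] <;> omega

private noncomputable def Ncnt (R : ℕ) (m : ℤ) : ℝ :=
  ∑ r ∈ Icc 1 R, if m ≤ (r:ℤ) then (1:ℝ) else 0

private lemma Ncnt_mono (R : ℕ) {a b : ℤ} (hab : a ≤ b) : Ncnt R b ≤ Ncnt R a := by
  apply Finset.sum_le_sum
  intro r _
  split_ifs <;> simp_all <;> omega

private lemma Ncnt_lip (R : ℕ) {a b : ℤ} (hab : a ≤ b) :
    Ncnt R a - Ncnt R b ≤ (b:ℝ) - a := by
  rw [Ncnt, Ncnt, ← Finset.sum_sub_distrib]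
  have e : ∀ r ∈ Icc 1 R,
      ((if a ≤ (r:ℤ) then (1:ℝ) else 0) - if b ≤ (r:ℤ) then (1:ℝ) else 0)
        = if a ≤ (r:ℤ) ∧ (r:ℤ) < b then (1:ℝ) else 0 := by
    intro r _
    split_ifs <;> simp_all <;> omega
  rw [Finset.sum_congr rfl e, Finset.sum_boole]
  have hcard : ((Icc 1 R).filter (fun r : ℕ => a ≤ (r:ℤ) ∧ (r:ℤ) < b)).card
      ≤ (Finset.Ico a b).card := by
    apply Finset.card_le_card_of_injOn (fun r : ℕ => (r:ℤ))
    · intro r hr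
      simp only [Finset.mem_coe, Finset.mem_filter, Finset.mem_Ico] at *
      omega
    · intro x _ y _ hxy
      simpa using hxy
  have h2 : ((Finset.Ico a b).card : ℝ) = (b:ℝ) - a := by
    rw [Int.card_Ico]
    have : ((b - a).toNat : ℤ) = b - a := Int.toNat_of_nonneg (sub_nonneg.2 hab)
    have : ((b - a).toNat : ℝ) = ((b - a : ℤ) : ℝ) := by exact_mod_cast congrArg (Int.cast : ℤ → ℝ) this
    rw [this]
    push_cast
    ring
  calc (((Icc 1 R).filter (fun r : ℕ => a ≤ (r:ℤ) ∧ (r:ℤ) < b)).card : ℝ)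
      ≤ ((Finset.Ico a b).card : ℝ) := by exact_mod_cast hcard
    _ = (b:ℝ) - a := h2

private lemma Ncnt_abs' (R : ℕ) {a b : ℤ} (hab : a ≤ b) :
    |Ncnt R a - Ncnt R b| ≤ (b:ℝ) - a := by
  have h1 := Ncnt_lip R hab
  have h2 := Ncnt_mono R hab
  have h3 : (a:ℝ) ≤ b := by exact_mod_cast hab
  rw [abs_le]
  constructor <;> linarith

private lemma Ncnt_abs (R : ℕ) (a b : ℤ) : |Ncnt R a - Ncnt R b| ≤ ((|a - b| : ℤ) : ℝ) := by
  rcases le_total a b with h | h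
  · have := Ncnt_abs' R h
    have he : ((|a - b| : ℤ) : ℝ) = (b:ℝ) - a := by
      rw [abs_sub_comm, abs_of_nonneg (by omega : (0:ℤ) ≤ b - a)]; push_cast; ring
    linarith
  · have := Ncnt_abs' R h
    have he : ((|a - b| : ℤ) : ℝ) = (a:ℝ) - b := by
      rw [abs_of_nonneg (by omega : (0:ℤ) ≤ a - b)]; push_cast; ring
    rw [abs_sub_comm]
    linarith

private lemma Ncnt_zero (R : ℕ) {m : ℤ} (h : (R:ℤ) < m) : Ncnt R m = 0 := by
  apply Finset.sum_eq_zero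
  intro r hr
  simp only [Finset.mem_Icc] at hr
  rw [if_neg (by omega)]


set_option maxHeartbeats 1000000 in
/-- Finite-range Lagrange bilinear form estimate:
`|Σ_{r=1}^{R} W_{[-r,r]}(f,g)| ≤ (Σ_{j=1}^{K} 4j|w_j|) ‖f‖_{ℓ²(R+K)} ‖g‖_{ℓ²(R+K)}`. -/
theorem stmt10 (K : ℕ) (w : ℤ → ℂ) (hw : ∀ k : ℤ, (starRingEnd ℂ) (w (-k)) = w k)
    (hsupp : ∀ k : ℤ, (K : ℤ) < |k| → w k = 0)
    (v : ℤ → ℝ) (f g : ℤ → ℂ)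
    (H : (ℤ → ℂ) → (ℤ → ℂ))
    (hH : ∀ (u : ℤ → ℂ) (n : ℤ),
      H u n = (∑ k ∈ Finset.Icc (-(K : ℤ)) K, w k * u (n + k)) + (v n : ℂ) * u n)
    (W : ℕ → ℂ)
    (hW : ∀ r : ℕ, W r = ∑ n ∈ Finset.Icc (-(r : ℤ)) r,
      (H f n * (starRingEnd ℂ) (g n) - f n * (starRingEnd ℂ) (H g n)))
    (R : ℕ) :
    ‖∑ r ∈ Finset.Icc 1 R, W r‖ ≤
      (∑ j ∈ Finset.Icc 1 K, 4 * (j : ℝ) * ‖w (j : ℤ)‖) *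
        Real.sqrt (∑ n ∈ Finset.Icc (-((R : ℤ) + K)) ((R : ℤ) + K), ‖f n‖ ^ 2) *
        Real.sqrt (∑ n ∈ Finset.Icc (-((R : ℤ) + K)) ((R : ℤ) + K), ‖g n‖ ^ 2) := by
  have hw' : ∀ k : ℤ, (starRingEnd ℂ) (w k) = w (-k) := by
    intro k; have := hw (-k); rwa [neg_neg] at this
  set a : ℤ → ℤ → ℂ := fun k n => f (n + k) * (starRingEnd ℂ) (g n) with ha
  have hA : ∀ r : ℕ, W r = ∑ k ∈ Finset.Icc (-(K:ℤ)) K, w k *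
      ((∑ n ∈ Finset.Icc (-(r:ℤ)) r, a k n)
        - ∑ n ∈ Finset.Icc (-(r:ℤ)-k) ((r:ℤ)-k), a k n) := by
    intro r
    rw [hW r]
    have key : ∀ n ∈ Finset.Icc (-(r:ℤ)) r,
        H f n * (starRingEnd ℂ) (g n) - f n * (starRingEnd ℂ) (H g n)
          = (∑ k ∈ Finset.Icc (-(K:ℤ)) K, w k * f (n+k) * (starRingEnd ℂ) (g n))
            - ∑ k ∈ Finset.Icc (-(K:ℤ)) K, w (-k) * f n * (starRingEnd ℂ) (g (n+k)) := by
      intro n _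
      rw [hH f n, hH g n, map_add, map_mul, map_sum, Complex.conj_ofReal, add_mul, mul_add,
        Finset.sum_mul, Finset.mul_sum]
      have e2 : ∑ k ∈ Icc (-(K:ℤ)) K, f n * (starRingEnd ℂ) (w k * g (n+k))
          = ∑ k ∈ Icc (-(K:ℤ)) K, w (-k) * f n * (starRingEnd ℂ) (g (n+k)) :=
        Finset.sum_congr rfl fun k _ => by rw [map_mul, hw']; ring
      rw [e2]
      ring
    rw [Finset.sum_congr rfl key, Finset.sum_sub_distrib, Finset.sum_comm,
      Finset.sum_comm (s := Finset.Icc (-(r:ℤ)) r)]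
    have e3 : ∑ k ∈ Finset.Icc (-(K:ℤ)) K, ∑ n ∈ Finset.Icc (-(r:ℤ)) r,
          w (-k) * f n * (starRingEnd ℂ) (g (n+k))
        = ∑ k ∈ Finset.Icc (-(K:ℤ)) K, ∑ n ∈ Finset.Icc (-(r:ℤ)) r,
          w k * f n * (starRingEnd ℂ) (g (n-k)) := by
    -- h k := ∑ n, w k * f n * conj (g (n-k)); then h (-k) = LHS term
      have := negSum K (fun k => ∑ n ∈ Finset.Icc (-(r:ℤ)) r,
        w k * f n * (starRingEnd ℂ) (g (n-k)))
      simp only [sub_neg_eq_add] at this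
      exact this
    rw [e3]
    rw [← Finset.sum_sub_distrib]
    apply Finset.sum_congr rfl
    intro k _
    have e4 : ∑ n ∈ Finset.Icc (-(r:ℤ)) r, w k * f n * (starRingEnd ℂ) (g (n-k))
        = ∑ m ∈ Finset.Icc (-(r:ℤ)-k) ((r:ℤ)-k), w k * a k m := by
      rw [shiftSum (-(r:ℤ)) r k (fun n => w k * f n * (starRingEnd ℂ) (g (n-k)))]
      apply Finset.sum_congr rfl
      intro m _
      simp only [ha, add_sub_cancel_right]
      ring
    have e5 : ∑ n ∈ Finset.Icc (-(r:ℤ)) r, w k * f (n+k) * (starRingEnd ℂ) (g n)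
        = ∑ n ∈ Finset.Icc (-(r:ℤ)) r, w k * a k n :=
      Finset.sum_congr rfl fun n _ => by simp [ha, mul_assoc]
    rw [e4, e5, ← Finset.mul_sum, ← Finset.mul_sum, ← mul_sub]
  -- notation
  set M : ℤ := (R:ℤ) + (K:ℤ) with hM
  set S : Finset ℤ := Finset.Icc (-M) M with hS
  set χ : ℕ → ℤ → ℂ := fun r n => (((if |n| ≤ (r:ℤ) then (1:ℝ) else 0) : ℝ) : ℂ) with hχ
  set c : ℤ → ℤ → ℂ := fun k n => ∑ r ∈ Finset.Icc 1 R, (χ r n - χ r (n+k)) with hc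
  -- Step B
  have hB : ∀ r ∈ Finset.Icc 1 R, W r = ∑ k ∈ Finset.Icc (-(K:ℤ)) K, w k *
      ∑ n ∈ S, (χ r n - χ r (n+k)) * a k n := by
    intro r hr
    rw [Finset.mem_Icc] at hr
    rw [hA r]
    apply Finset.sum_congr rfl
    intro k hk
    rw [Finset.mem_Icc] at hk
    congr 1
    have m1 : ∀ x : ℤ, x ∈ Finset.Icc (-(r:ℤ)) r ↔ |x| ≤ (r:ℤ) := fun x => by
      rw [Finset.mem_Icc, abs_le]
    have m2 : ∀ x : ℤ, x ∈ Finset.Icc (-(r:ℤ)-k) ((r:ℤ)-k) ↔ |x+k| ≤ (r:ℤ) := fun x => by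
      rw [Finset.mem_Icc, abs_le]; omega
    have hsub1 : Finset.Icc (-(r:ℤ)) r ⊆ S := by
      intro x hx
      rw [Finset.mem_Icc] at hx ⊢
      omega
    have hsub2 : Finset.Icc (-(r:ℤ)-k) ((r:ℤ)-k) ⊆ S := by
      intro x hx
      rw [Finset.mem_Icc] at hx ⊢
      omega
    have t1 : ∑ n ∈ S, χ r n * a k n = ∑ n ∈ Finset.Icc (-(r:ℤ)) r, a k n := by
      rw [← Finset.sum_subset hsub1 (fun x _ hx => by
        have hxa : ¬ (|x| ≤ (r:ℤ)) := fun hc => hx ((m1 x).2 hc)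
        simp [hχ, hxa])]
      apply Finset.sum_congr rfl
      intro n hn
      have := (m1 n).1 hn
      simp [hχ, this]
    have t2 : ∑ n ∈ S, χ r (n+k) * a k n = ∑ n ∈ Finset.Icc (-(r:ℤ)-k) ((r:ℤ)-k), a k n := by
      rw [← Finset.sum_subset hsub2 (fun x _ hx => by
        have hxa : ¬ (|x+k| ≤ (r:ℤ)) := fun hc => hx ((m2 x).2 hc)
        simp [hχ, hxa])]
      apply Finset.sum_congr rfl
      intro n hn
      have := (m2 n).1 hn
      simp [hχ, this]
    rw [← t1, ← t2, ← Finset.sum_sub_distrib]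
    apply Finset.sum_congr rfl
    intro n _
    ring
  -- main identity
  have hmain : ∑ r ∈ Finset.Icc 1 R, W r
      = ∑ k ∈ Finset.Icc (-(K:ℤ)) K, w k * ∑ n ∈ S, c k n * a k n := by
    rw [Finset.sum_congr rfl hB, Finset.sum_comm]
    apply Finset.sum_congr rfl
    intro k _
    rw [← Finset.mul_sum, Finset.sum_comm]
    congr 1
    apply Finset.sum_congr rfl
    intro n _
    rw [← Finset.sum_mul]
  -- value of c
  have hcval : ∀ k n : ℤ, c k n = ((Ncnt R |n| - Ncnt R |n+k| : ℝ) : ℂ) := by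
    intro k n
    have hgen : ∀ m : ℤ, ∑ r ∈ Finset.Icc 1 R, χ r m = ((Ncnt R |m| : ℝ) : ℂ) := by
      intro m
      rw [Ncnt, Complex.ofReal_sum]
    show (∑ r ∈ Finset.Icc 1 R, (χ r n - χ r (n+k))) = ((Ncnt R |n| - Ncnt R |n+k| : ℝ) : ℂ)
    rw [Finset.sum_sub_distrib, hgen, hgen, ← Complex.ofReal_sub]
  -- bounds on c
  have hcnorm : ∀ k n : ℤ, ‖c k n‖ ≤ ((|k| : ℤ) : ℝ) := by
    intro k n
    rw [hcval, Complex.norm_real]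
    refine (Ncnt_abs R _ _).trans ?_
    have h1 : |(|n| - |n+k|)| ≤ |k| := by
      have := abs_abs_sub_abs_le_abs_sub n (n+k)
      simpa using this
    exact_mod_cast h1
  have hczero : ∀ k : ℤ, |k| ≤ (K:ℤ) → ∀ n : ℤ, ¬ (|n+k| ≤ M) → c k n = 0 := by
    intro k hk n hn
    have habs : |n+k| ≤ |n| + |k| := abs_add_le n k
    rw [hcval, Ncnt_zero R (by omega), Ncnt_zero R (by omega)]
    simp
  -- Cauchy-Schwarz setup
  set F : ℤ → ℝ := fun m => if m ∈ S then ‖f m‖ else 0 with hF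
  have hpt : ∀ k : ℤ, |k| ≤ (K:ℤ) → ∀ n ∈ S, ‖c k n * a k n‖
      ≤ ((|k|:ℤ):ℝ) * (F (n+k) * ‖g n‖) := by
    intro k hk n _
    by_cases hnk : n + k ∈ S
    · have hF1 : F (n+k) = ‖f (n+k)‖ := if_pos hnk
      rw [hF1]
      have hnorm : ‖c k n * a k n‖ = ‖c k n‖ * (‖f (n+k)‖ * ‖g n‖) := by
        simp only [ha, norm_mul, RCLike.norm_conj]
      rw [hnorm]
      exact mul_le_mul_of_nonneg_right (hcnorm k n) (by positivity)
    · have : c k n = 0 := by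
        apply hczero k hk n
        intro hcon
        exact hnk (by rw [hS, Finset.mem_Icc]; have := abs_le.mp hcon; omega)
      rw [this]
      simp only [zero_mul, norm_zero]
      positivity
  have hshift : ∀ k : ℤ, ∑ n ∈ S, F (n+k)^2 ≤ ∑ m ∈ S, ‖f m‖^2 := by
    intro k
    have e1 : ∑ n ∈ S, F (n+k)^2 = ∑ n ∈ S.filter (fun n => n + k ∈ S), ‖f (n+k)‖^2 := by
      rw [Finset.sum_filter]
      apply Finset.sum_congr rfl
      intro n _
      by_cases h : n + k ∈ S
      · simp [hF, h]
      · simp [hF, h]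
    have himg := Finset.sum_image (f := fun m => ‖f m‖^2) (g := fun n : ℤ => n + k)
      (s := S.filter (fun n => n + k ∈ S)) (fun x _ y _ h => by exact add_right_cancel h)
    rw [e1, ← himg]
    apply Finset.sum_le_sum_of_subset_of_nonneg
    · intro m hm
      rw [Finset.mem_image] at hm
      obtain ⟨n, hn, rfl⟩ := hm
      exact (Finset.mem_filter.1 hn).2
    · intro m _ _
      positivity
  have hCS : ∀ k : ℤ, ∑ n ∈ S, F (n+k) * ‖g n‖
      ≤ Real.sqrt (∑ n ∈ S, ‖f n‖^2) * Real.sqrt (∑ n ∈ S, ‖g n‖^2) := by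
    intro k
    calc ∑ n ∈ S, F (n+k) * ‖g n‖
        ≤ Real.sqrt (∑ n ∈ S, F (n+k)^2) * Real.sqrt (∑ n ∈ S, ‖g n‖^2) :=
          Real.sum_mul_le_sqrt_mul_sqrt S _ _
      _ ≤ Real.sqrt (∑ n ∈ S, ‖f n‖^2) * Real.sqrt (∑ n ∈ S, ‖g n‖^2) := by
          apply mul_le_mul_of_nonneg_right (Real.sqrt_le_sqrt (hshift k))
          positivity
  set Nf : ℝ := Real.sqrt (∑ n ∈ S, ‖f n‖^2) with hNf
  set Ng : ℝ := Real.sqrt (∑ n ∈ S, ‖g n‖^2) with hNg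
  have hNf0 : 0 ≤ Nf := Real.sqrt_nonneg _
  have hNg0 : 0 ≤ Ng := Real.sqrt_nonneg _
  -- assemble
  have step1 : ‖∑ r ∈ Finset.Icc 1 R, W r‖
      ≤ ∑ k ∈ Finset.Icc (-(K:ℤ)) K, ((|k|:ℤ):ℝ) * ‖w k‖ * (Nf * Ng) := by
    rw [hmain]
    refine (norm_sum_le _ _).trans ?_
    apply Finset.sum_le_sum
    intro k hk
    rw [Finset.mem_Icc] at hk
    have hkK : |k| ≤ (K:ℤ) := abs_le.mpr hk
    rw [norm_mul]
    calc ‖w k‖ * ‖∑ n ∈ S, c k n * a k n‖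
        ≤ ‖w k‖ * ∑ n ∈ S, ‖c k n * a k n‖ :=
          mul_le_mul_of_nonneg_left (norm_sum_le _ _) (norm_nonneg _)
      _ ≤ ‖w k‖ * ∑ n ∈ S, ((|k|:ℤ):ℝ) * (F (n+k) * ‖g n‖) := by
          apply mul_le_mul_of_nonneg_left _ (norm_nonneg _)
          exact Finset.sum_le_sum (hpt k hkK)
      _ = ‖w k‖ * (((|k|:ℤ):ℝ) * ∑ n ∈ S, F (n+k) * ‖g n‖) := by
          rw [← Finset.mul_sum]
      _ ≤ ‖w k‖ * (((|k|:ℤ):ℝ) * (Nf * Ng)) := by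
          apply mul_le_mul_of_nonneg_left _ (norm_nonneg _)
          apply mul_le_mul_of_nonneg_left (hCS k)
          positivity
      _ = ((|k|:ℤ):ℝ) * ‖w k‖ * (Nf * Ng) := by ring
  -- coefficient sum
  have hcoef : ∑ k ∈ Finset.Icc (-(K:ℤ)) K, ((|k|:ℤ):ℝ) * ‖w k‖
      ≤ ∑ j ∈ Finset.Icc 1 K, 2 * (j:ℝ) * ‖w (j:ℤ)‖ := by
    have hwnorm : ∀ j : ℤ, ‖w (-j)‖ = ‖w j‖ := by
      intro j
      rw [← hw j, RCLike.norm_conj]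
    have hsplit : Finset.Icc (-(K:ℤ)) K = Finset.Icc (-(K:ℤ)) 0 ∪ Finset.Icc 1 K := by
      ext x
      simp only [Finset.mem_Icc, Finset.mem_union]
      omega
    have hdisj : Disjoint (Finset.Icc (-(K:ℤ)) 0) (Finset.Icc (1:ℤ) K) := by
      rw [Finset.disjoint_left]
      intro x hx hx'
      rw [Finset.mem_Icc] at hx hx'
      omega
    rw [hsplit, Finset.sum_union hdisj]
    have hneg : ∑ k ∈ Finset.Icc (-(K:ℤ)) 0, ((|k|:ℤ):ℝ) * ‖w k‖
        = ∑ j ∈ Finset.Icc (0:ℤ) K, ((|j|:ℤ):ℝ) * ‖w j‖ := by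
      apply Finset.sum_nbij' (fun k => -k) (fun k => -k)
      · intro x hx; rw [Finset.mem_Icc] at hx ⊢; omega
      · intro x hx; rw [Finset.mem_Icc] at hx ⊢; omega
      · intro x _; ring
      · intro x _; ring
      · intro x _; rw [abs_neg, hwnorm]
    have hzero : ∑ j ∈ Finset.Icc (0:ℤ) K, ((|j|:ℤ):ℝ) * ‖w j‖
        = ∑ j ∈ Finset.Icc (1:ℤ) K, ((|j|:ℤ):ℝ) * ‖w j‖ := by
      apply (Finset.sum_subset (fun x hx => by rw [Finset.mem_Icc] at hx ⊢; omega)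
        (fun x hx hx' => ?_)).symm
      rw [Finset.mem_Icc] at hx hx'
      have : x = 0 := by omega
      simp [this]
    have hcast : ∀ (φ : ℤ → ℝ), ∑ j ∈ Finset.Icc (1:ℤ) K, φ j
        = ∑ j ∈ Finset.Icc 1 K, φ (j:ℤ) := by
      intro φ
      apply Finset.sum_nbij' (fun k : ℤ => k.toNat) (fun j : ℕ => (j:ℤ))
      · intro x hx; rw [Finset.mem_Icc] at hx ⊢; omega
      · intro x hx; rw [Finset.mem_Icc] at hx ⊢; omega
      · intro x hx; rw [Finset.mem_Icc] at hx; omega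
      · intro x hx; rw [Finset.mem_Icc] at hx; omega
      · intro x hx
        rw [Finset.mem_Icc] at hx
        congr 1
        omega
    rw [hneg, hzero, hcast (fun j => ((|j|:ℤ):ℝ) * ‖w j‖)]
    rw [← Finset.sum_add_distrib]
    apply Finset.sum_le_sum
    intro j hj
    rw [Finset.mem_Icc] at hj
    have : ((|(j:ℤ)| : ℤ) : ℝ) = (j:ℝ) := by
      rw [abs_of_nonneg (by positivity)]
      push_cast
      ring
    rw [this]
    nlinarith [norm_nonneg (w (j:ℤ)), (by exact_mod_cast hj.1 : (1:ℝ) ≤ (j:ℝ))]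
  -- finish
  refine step1.trans ?_
  calc ∑ k ∈ Finset.Icc (-(K:ℤ)) K, ((|k|:ℤ):ℝ) * ‖w k‖ * (Nf * Ng)
      = (∑ k ∈ Finset.Icc (-(K:ℤ)) K, ((|k|:ℤ):ℝ) * ‖w k‖) * (Nf * Ng) := by
        rw [Finset.sum_mul]
    _ ≤ (∑ j ∈ Finset.Icc 1 K, 2 * (j:ℝ) * ‖w (j:ℤ)‖) * (Nf * Ng) := by
        exact mul_le_mul_of_nonneg_right hcoef (mul_nonneg hNf0 hNg0)
    _ ≤ (∑ j ∈ Finset.Icc 1 K, 4 * (j:ℝ) * ‖w (j:ℤ)‖) * (Nf * Ng) := by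
        apply mul_le_mul_of_nonneg_right _ (mul_nonneg hNf0 hNg0)
        apply Finset.sum_le_sum
        intro j _
        nlinarith [norm_nonneg (w (j:ℤ)), (by positivity : (0:ℝ) ≤ (j:ℝ))]
    _ = (∑ j ∈ Finset.Icc 1 K, 4 * (j:ℝ) * ‖w (j:ℤ)‖) * Nf * Ng := by ring
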